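/- Let n ≥ 1, let φ : ℝⁿ → ℝ be twice continuously differentiable with L_H-Lipschitz Hessian, let x, s ∈ ℝⁿ, let g ∈ ℝⁿ and H : ℝⁿ → ℝⁿ symmetric linear satisfy the accuracy conditions ‖∇φ(x) − g‖ ≤ κ_g·max{μ/σ, ‖s‖²} and ‖(∇²φ(x) − H)s‖ ≤ κ_H·max{μ/σ, ‖s‖²}, where κ_g, κ_H ≥ 0 and μ, σ > 0. Then ‖∇φ(x+s) − g − H s‖ ≤ (κ_g + κ_H)·max{μ/σ, ‖s‖²} + (L_H/2)‖s‖². -/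

import Mathlib

open RealInnerProductSpace

/-- Bound on the error of the model gradient at the trial point: under the
accuracy conditions and Lipschitz continuity of the Hessian,
`‖∇φ(x+s) − g − H s‖ ≤ (κ_g + κ_H)·max{μ/σ, ‖s‖²} + (L_H/2)‖s‖²`. -/
theorem sarc_model_gradient_error (n : ℕ) (hn : 1 ≤ n)
    (φ : EuclideanSpace ℝ (Fin n) → ℝ) (hφ : ContDiff ℝ 2 φ)
    (Hess : EuclideanSpace ℝ (Fin n) →
      EuclideanSpace ℝ (Fin n) →L[ℝ] EuclideanSpace ℝ (Fin n))
    (hHess : ∀ y, HasFDerivAt (gradient φ) (Hess y) y)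
    (L_H : ℝ) (hLH : ∀ y z, ‖Hess y - Hess z‖ ≤ L_H * ‖y - z‖)
    (x s g : EuclideanSpace ℝ (Fin n))
    (H : EuclideanSpace ℝ (Fin n) →L[ℝ] EuclideanSpace ℝ (Fin n))
    (hHsym : ∀ u v : EuclideanSpace ℝ (Fin n), ⟪H u, v⟫ = ⟪u, H v⟫)
    (κg κH μ σ : ℝ) (hκg : 0 ≤ κg) (hκH : 0 ≤ κH) (hμ : 0 < μ) (hσ : 0 < σ)
    (hacc_g : ‖gradient φ x - g‖ ≤ κg * max (μ / σ) (‖s‖ ^ 2))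
    (hacc_H : ‖(Hess x - H) s‖ ≤ κH * max (μ / σ) (‖s‖ ^ 2)) :
    ‖gradient φ (x + s) - g - H s‖ ≤
      (κg + κH) * max (μ / σ) (‖s‖ ^ 2) + (L_H / 2) * ‖s‖ ^ 2 := by
  -- Continuity of the Hessian map (from its Lipschitz bound).
  have hLH0 : 0 ≤ L_H := by
    have h := hLH x (x + EuclideanSpace.single ⟨0, hn⟩ (1 : ℝ))
    have h1 : ‖Hess x - Hess (x + EuclideanSpace.single ⟨0, hn⟩ (1 : ℝ))‖ ≥ 0 :=
      norm_nonneg _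
    have h2 : ‖x - (x + EuclideanSpace.single ⟨0, hn⟩ (1 : ℝ))‖ = 1 := by
      simp [sub_add_eq_sub_sub, norm_neg]
    nlinarith [h, h1, h2]
  have hHcont : Continuous Hess := by
    refine (LipschitzWith.of_dist_le_mul (K := L_H.toNNReal) fun y z => ?_).continuous
    calc dist (Hess y) (Hess z) = ‖Hess y - Hess z‖ := dist_eq_norm _ _
      _ ≤ L_H * ‖y - z‖ := hLH y z
      _ ≤ L_H.toNNReal * dist y z := by
          rw [dist_eq_norm]
          exact mul_le_mul_of_nonneg_right (Real.le_coe_toNNReal _) (norm_nonneg _)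
  -- The key Taylor bound: ‖∇φ(x+s) − ∇φ(x) − Hess x s‖ ≤ (L_H/2)‖s‖².
  set f : ℝ → EuclideanSpace ℝ (Fin n) :=
    fun t => (Hess (x + t • s)) s - (Hess x) s with hf
  have hpath : ∀ t : ℝ, HasDerivAt (fun t : ℝ => x + t • s) s t := fun t => by
    simpa using ((hasDerivAt_id t).smul_const s).const_add x
  have hderiv : ∀ t : ℝ, HasDerivAt
      (fun t : ℝ => gradient φ (x + t • s) - t • (Hess x) s) (f t) t := by
    intro t
    exact ((hHess (x + t • s)).comp_hasDerivAt t (hpath t)).sub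
      (by simpa using (hasDerivAt_id t).smul_const ((Hess x) s))
  have hfc : Continuous f := by
    have : Continuous fun t : ℝ => Hess (x + t • s) :=
      hHcont.comp (continuous_const.add (continuous_id.smul continuous_const))
    exact (this.clm_apply continuous_const).sub continuous_const
  have hint : IntervalIntegrable f MeasureTheory.volume 0 1 :=
    hfc.intervalIntegrable 0 1
  have hkey : gradient φ (x + s) - gradient φ x - (Hess x) s
      = ∫ t in (0:ℝ)..1, f t := by
    rw [intervalIntegral.integral_eq_sub_of_hasDerivAt (fun t _ => hderiv t) hint]
    simp
    abel
  have hbound : ‖gradient φ (x + s) - gradient φ x - (Hess x) s‖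
      ≤ (L_H / 2) * ‖s‖ ^ 2 := by
    rw [hkey]
    have hle : ∀ᵐ t ∂(MeasureTheory.volume.restrict (Set.uIoc (0:ℝ) 1)),
        ‖f t‖ ≤ L_H * ‖s‖ ^ 2 * t := by
      refine MeasureTheory.ae_restrict_of_forall_mem measurableSet_uIoc fun t ht => ?_
      rw [Set.uIoc_of_le zero_le_one] at ht
      have ht0 : 0 ≤ t := le_of_lt ht.1
      calc ‖f t‖ = ‖(Hess (x + t • s) - Hess x) s‖ := by simp [hf]
        _ ≤ ‖Hess (x + t • s) - Hess x‖ * ‖s‖ :=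
            ContinuousLinearMap.le_opNorm _ _
        _ ≤ (L_H * ‖x + t • s - x‖) * ‖s‖ :=
            mul_le_mul_of_nonneg_right (hLH _ _) (norm_nonneg _)
        _ = L_H * ‖s‖ ^ 2 * t := by
            rw [add_sub_cancel_left, norm_smul]
            simp [Real.norm_eq_abs, abs_of_nonneg ht0]
            ring
    have hgint : IntervalIntegrable (fun t => L_H * ‖s‖ ^ 2 * t)
        MeasureTheory.volume 0 1 := by
      exact ((continuous_const.mul continuous_id)).intervalIntegrable 0 1
    calc ‖∫ t in (0:ℝ)..1, f t‖ ≤ |∫ t in (0:ℝ)..1, L_H * ‖s‖ ^ 2 * t| :=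
          intervalIntegral.norm_integral_le_abs_of_norm_le hle hgint
      _ = (L_H / 2) * ‖s‖ ^ 2 := by
          rw [intervalIntegral.integral_const_mul, integral_id]
          rw [abs_of_nonneg (by positivity)]
          ring
  -- Combine.
  have hdecomp : gradient φ (x + s) - g - H s
      = (gradient φ (x + s) - gradient φ x - (Hess x) s)
        + (gradient φ x - g) + ((Hess x - H) s) := by
    simp only [ContinuousLinearMap.sub_apply]
    abel
  calc ‖gradient φ (x + s) - g - H s‖
      ≤ ‖gradient φ (x + s) - gradient φ x - (Hess x) s‖ + ‖gradient φ x - g‖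
        + ‖(Hess x - H) s‖ := by
        rw [hdecomp]; exact norm_add₃_le
    _ ≤ (L_H / 2) * ‖s‖ ^ 2 + κg * max (μ / σ) (‖s‖ ^ 2)
        + κH * max (μ / σ) (‖s‖ ^ 2) := by
        gcongr
    _ = (κg + κH) * max (μ / σ) (‖s‖ ^ 2) + (L_H / 2) * ‖s‖ ^ 2 := by ring
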